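/- For a binary infinite word w: if w is not weakly abelian periodic, then the frequencies of both letters in w exist, i.e., lim_{n→∞}|pref_n(w)|₀/n exists (and then so does the frequency of 1). -/

import Mathlib

open Filter Topology

/-- Number of 1's (`true`) in the length-`n` prefix of the infinite binary word `w`. -/
def ones (w : ℕ → Bool) (n : ℕ) : ℕ :=
  ((Finset.range n).filter (fun i => w i = true)).card

/-- Number of 0's (`false`) in the length-`n` prefix of `w`. -/
def zeros (w : ℕ → Bool) (n : ℕ) : ℕ := n - ones w n

/-- The graphic of `w`: `g_w(n) = |pref_n(w)|₁ - |pref_n(w)|₀`. -/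
def graphic (w : ℕ → Bool) (n : ℕ) : ℤ := (ones w n : ℤ) - (zeros w n : ℤ)

/-- `w` is weakly abelian periodic with frequency `ρ` of the letter 1 in the blocks:
there is a factorization `w = v₀v₁v₂⋯` (cut points `k 0 < k 1 < ⋯`, with `v₀` the
prefix of length `k 0`) such that each block `vᵢ = w[k i, k (i+1))`, `i ≥ 1`,
has frequency `ρ` of the letter 1. -/
def WAPwith (w : ℕ → Bool) (ρ : ℚ) : Prop :=
  ∃ k : ℕ → ℕ, StrictMono k ∧
    ∀ i : ℕ, ((ones w (k (i+1)) : ℚ) - (ones w (k i) : ℚ))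
      = ρ * ((k (i+1) : ℚ) - (k i : ℚ))

/-- `w` is weakly abelian periodic. -/
def WAP (w : ℕ → Bool) : Prop := ∃ ρ : ℚ, WAPwith w ρ

/-- `w` is bounded weakly abelian periodic: WAP with blocks of uniformly bounded length. -/
def BoundedWAP (w : ℕ → Bool) : Prop :=
  ∃ (ρ : ℚ) (k : ℕ → ℕ) (C : ℕ), StrictMono k ∧ (∀ i, k (i+1) - k i ≤ C) ∧
    ∀ i : ℕ, ((ones w (k (i+1)) : ℚ) - (ones w (k i) : ℚ))
      = ρ * ((k (i+1) : ℚ) - (k i : ℚ))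

/-- `w` has bounded width: its graphic lies between two parallel lines with
rational coefficients. -/
def BoundedWidth (w : ℕ → Bool) : Prop :=
  ∃ a b₁ b₂ : ℚ, ∀ n : ℕ,
    a * n + b₁ ≤ (graphic w n : ℚ) ∧ (graphic w n : ℚ) ≤ a * n + b₂

lemma ones_le (w : ℕ → Bool) (n : ℕ) : ones w n ≤ n := by
  calc ones w n ≤ (Finset.range n).card := Finset.card_filter_le _ _
  _ = n := Finset.card_range n

lemma ones_succ (w : ℕ → Bool) (n : ℕ) :
    ones w (n+1) = ones w n + (if w n then 1 else 0) := by
  unfold ones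
  rw [Finset.range_add_one, Finset.filter_insert]
  by_cases hw : w n = true
  · simp [hw, Finset.card_insert_of_notMem, Finset.notMem_range_self]
  · simp [hw]

lemma wap_of_osc (w : ℕ → Bool) (ρ : ℚ) (h0 : 0 < ρ) (h1 : ρ < 1)
    (hlo : ∀ N : ℕ, ∃ n ≥ N, (ones w n : ℚ) < ρ * n)
    (hhi : ∀ N : ℕ, ∃ n ≥ N, ρ * n < (ones w n : ℚ)) : WAPwith w ρ := by
  set p : ℤ := ρ.num with hp
  set q : ℤ := (ρ.den : ℤ) with hq
  have hqpos : (0:ℤ) < q := by rw [hq]; exact_mod_cast ρ.pos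
  have hppos : (0:ℤ) < p := Rat.num_pos.mpr h0
  have hpq : p < q := by
    rw [hp, hq]; exact_mod_cast Rat.lt_one_iff_num_lt_denom.mpr h1
  set g : ℕ → ℤ := fun n => q * (ones w n : ℤ) - p * n with hg
  have hrden : (ρ * q : ℚ) = (p : ℚ) := by
    rw [hp, hq]; push_cast; rw [mul_comm]; exact_mod_cast Rat.den_mul_eq_num ρ
  have hglo : ∀ N : ℕ, ∃ n ≥ N, g n < 0 := by
    intro N
    obtain ⟨n, hn, hlt⟩ := hlo N
    refine ⟨n, hn, ?_⟩
    have : (q : ℚ) * (ones w n : ℚ) < (p : ℚ) * n := by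
      have := mul_lt_mul_of_pos_right hlt (by exact_mod_cast hqpos : (0:ℚ) < q)
      calc (q:ℚ) * (ones w n) = (ones w n : ℚ) * q := mul_comm _ _
        _ < ρ * n * q := this
        _ = (ρ * q) * n := by ring
        _ = (p:ℚ) * n := by rw [hrden]
    have h' : q * (ones w n : ℤ) < p * n := by exact_mod_cast this
    simpa [hg] using sub_neg.mpr h'
  have hghi : ∀ N : ℕ, ∃ n ≥ N, 0 < g n := by
    intro N
    obtain ⟨n, hn, hlt⟩ := hhi N
    refine ⟨n, hn, ?_⟩
    have : (p : ℚ) * n < (q : ℚ) * (ones w n : ℚ) := by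
      have := mul_lt_mul_of_pos_right hlt (by exact_mod_cast hqpos : (0:ℚ) < q)
      calc (p:ℚ) * n = (ρ * q) * n := by rw [hrden]
        _ = ρ * n * q := by ring
        _ < (ones w n : ℚ) * q := this
        _ = (q:ℚ) * (ones w n) := mul_comm _ _
    have h' : p * (n:ℤ) < q * (ones w n : ℤ) := by exact_mod_cast this
    simpa [hg] using sub_pos.mpr h'
  have hstep : ∀ n, g (n+1) = g n - p ∨ g (n+1) = g n + (q - p) := by
    intro n
    rcases Bool.eq_false_or_eq_true (w n) with hw | hw
    · right; simp [hg, ones_succ, hw]; ring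
    · left; simp [hg, ones_succ, hw]; ring
  have hcross : ∀ N : ℕ, ∃ m ≥ N, 0 ≤ g m ∧ g m < q - p := by
    intro N
    obtain ⟨n, hn, hgn⟩ := hglo N
    obtain ⟨m', hm', hgm'⟩ := hghi (n+1)
    have hP : ∃ j, n < j ∧ 0 ≤ g j := ⟨m', hm', le_of_lt hgm'⟩
    classical
    set m := Nat.find hP with hm
    obtain ⟨hnm, hgm⟩ := Nat.find_spec hP
    have hm1 : n ≤ m - 1 := Nat.le_sub_one_of_lt hnm
    have hmeq : m - 1 + 1 = m := by omega
    have hprev : g (m-1) < 0 := by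
      rcases eq_or_lt_of_le hm1 with heq | hlt
      · rw [← heq]; exact hgn
      · have := Nat.find_min hP (m := m - 1) (by omega)
        push_neg at this
        exact this hlt
    refine ⟨m, le_trans hn (le_of_lt hnm), hgm, ?_⟩
    rcases hstep (m-1) with hs | hs <;> rw [hmeq] at hs
    · omega
    · omega
  have hpigeon : ∃ v : ℤ, ∀ N : ℕ, ∃ m ≥ N, g m = v := by
    by_contra hcon
    push_neg at hcon
    have hfib : ∀ v : ℤ, {m : ℕ | g m = v}.Finite := by
      intro v
      obtain ⟨N, hN⟩ := hcon v
      apply Set.Finite.subset (Set.finite_Iio N)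
      intro m hm
      simp only [Set.mem_Iio]
      by_contra hge
      exact (hN m (le_of_not_gt hge)) hm
    have hT : {m : ℕ | 0 ≤ g m ∧ g m < q - p}.Infinite := by
      apply Set.infinite_of_not_bddAbove
      rintro ⟨B, hB⟩
      obtain ⟨m, hm, h1, h2⟩ := hcross (B+1)
      have : m ≤ B := hB ⟨h1, h2⟩
      omega
    have hsub : {m : ℕ | 0 ≤ g m ∧ g m < q - p} ⊆
        ⋃ v ∈ Finset.Ico (0:ℤ) (q-p), {m : ℕ | g m = v} := by
      intro m hm
      simp only [Set.mem_iUnion]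
      exact ⟨g m, by simpa [Finset.mem_Ico] using hm, rfl⟩
    exact hT (Set.Finite.subset
      (Set.Finite.biUnion (Finset.finite_toSet _) (fun v _ => hfib v)) hsub)
  obtain ⟨v, hv⟩ := hpigeon
  classical
  choose f hf1 hf2 using fun N => hv (N+1)
  set k : ℕ → ℕ := fun i => Nat.rec (f 0) (fun _ prev => f prev) i with hk
  have hkmem : ∀ i, g (k i) = v := by
    intro i; cases i with
    | zero => exact hf2 0
    | succ j => exact hf2 _
  have hkmono : StrictMono k := by
    apply strictMono_nat_of_lt_succ
    intro i
    have := hf1 (k i)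
    show k i < f (k i)
    omega
  refine ⟨k, hkmono, ?_⟩
  intro i
  have e1 : g (k (i+1)) = v := hkmem (i+1)
  have e2 : g (k i) = v := hkmem i
  have hZ : q * ((ones w (k (i+1)) : ℤ) - (ones w (k i) : ℤ))
      = p * ((k (i+1) : ℤ) - (k i : ℤ)) := by
    simp only [hg] at e1 e2; linear_combination e1 - e2
  have hQ : (q : ℚ) * ((ones w (k (i+1)) : ℚ) - (ones w (k i) : ℚ))
      = (p : ℚ) * ((k (i+1) : ℚ) - (k i : ℚ)) := by exact_mod_cast hZ
  have hq0 : (q : ℚ) ≠ 0 := by positivity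
  have hrho : ρ = (p : ℚ) / (q : ℚ) := by
    rw [hp, hq]; exact_mod_cast (Rat.num_div_den ρ).symm
  rw [hrho]
  field_simp
  linarith [hQ]

/-- If a binary infinite word `w` is not weakly abelian periodic, then the
frequencies of both letters in `w` exist. -/
theorem not_WAP_imp_frequencies_exist (w : ℕ → Bool) (h : ¬ WAP w) :
    (∃ L : ℝ, Tendsto (fun n => (zeros w n : ℝ) / n) atTop (𝓝 L)) ∧
    (∃ L : ℝ, Tendsto (fun n => (ones w n : ℝ) / n) atTop (𝓝 L)) := by
  set u : ℕ → ℝ := fun n => (ones w n : ℝ) / n with hu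
  have hub : ∀ n, u n ≤ 1 := by
    intro n
    rcases Nat.eq_zero_or_pos n with h | h
    · simp [hu, h]
    · rw [hu]
      have := ones_le w n
      rw [div_le_one (by exact_mod_cast h)]
      exact_mod_cast this
  have hlb : ∀ n, 0 ≤ u n := fun n => by positivity
  have hbddA : IsBoundedUnder (· ≤ ·) atTop u := isBoundedUnder_of ⟨1, hub⟩
  have hbddB : IsBoundedUnder (· ≥ ·) atTop u := isBoundedUnder_of ⟨0, hlb⟩
  set L : ℝ := limsup u atTop with hL
  have hle : liminf u atTop ≤ L := liminf_le_limsup hbddA hbddB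
  have htend : Tendsto u atTop (𝓝 L) := by
    rcases eq_or_lt_of_le hle with heq | hlt
    · exact tendsto_of_liminf_eq_limsup heq rfl hbddA hbddB
    · exfalso
      obtain ⟨ρ, hρ1, hρ2⟩ := exists_rat_btwn hlt
      have hfreqlo : ∃ᶠ n in atTop, u n < (ρ:ℝ) :=
        frequently_lt_of_liminf_lt hbddA.isCoboundedUnder_ge hρ1
      have hfreqhi : ∃ᶠ n in atTop, (ρ:ℝ) < u n :=
        frequently_lt_of_lt_limsup hbddB.isCoboundedUnder_le hρ2
      obtain ⟨n₀, -, hn₀⟩ := (frequently_atTop.mp hfreqlo) 0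
      have hρpos : (0:ℚ) < ρ := by exact_mod_cast lt_of_le_of_lt (hlb n₀) hn₀
      obtain ⟨n₁, -, hn₁⟩ := (frequently_atTop.mp hfreqhi) 0
      have hρlt1 : ρ < 1 := by exact_mod_cast lt_of_lt_of_le hn₁ (hub n₁)
      have hlo : ∀ N : ℕ, ∃ n ≥ N, (ones w n : ℚ) < ρ * n := by
        intro N
        obtain ⟨n, hn, hlt'⟩ := (frequently_atTop.mp hfreqlo) (max N 1)
        refine ⟨n, le_trans (le_max_left _ _) hn, ?_⟩
        have hn1 : (0:ℝ) < n := by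
          have : (1:ℕ) ≤ n := le_trans (le_max_right _ _) hn
          exact_mod_cast this
        rw [hu] at hlt'
        have : (ones w n : ℝ) < ρ * n := by
          rw [div_lt_iff₀ hn1] at hlt'; linarith [hlt']
        exact_mod_cast this
      have hhi : ∀ N : ℕ, ∃ n ≥ N, ρ * (n:ℚ) < (ones w n : ℚ) := by
        intro N
        obtain ⟨n, hn, hlt'⟩ := (frequently_atTop.mp hfreqhi) (max N 1)
        refine ⟨n, le_trans (le_max_left _ _) hn, ?_⟩
        have hn1 : (0:ℝ) < n := by
          have : (1:ℕ) ≤ n := le_trans (le_max_right _ _) hn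
          exact_mod_cast this
        rw [hu] at hlt'
        have : (ρ:ℝ) * n < (ones w n : ℝ) := by
          rw [lt_div_iff₀ hn1] at hlt'; linarith [hlt']
        exact_mod_cast this
      exact h ⟨ρ, wap_of_osc w ρ hρpos hρlt1 hlo hhi⟩
  refine ⟨⟨1 - L, ?_⟩, ⟨L, htend⟩⟩
  have heq : ∀ᶠ n in atTop, 1 - u n = (zeros w n : ℝ) / n := by
    filter_upwards [eventually_ge_atTop 1] with n hn
    have hn0 : (0:ℝ) < n := by exact_mod_cast hn
    have hz : (zeros w n : ℝ) = (n : ℝ) - (ones w n : ℝ) := by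
      have := ones_le w n
      unfold zeros
      push_cast [this]
      ring
    rw [hz, hu]
    field_simp
  exact Tendsto.congr' heq (tendsto_const_nhds.sub htend)
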